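/- Let G be a multigraph edge-coloured with n colours such that each colour class is a disjoint union of non-trivial cliques spanning at least 2n + 2m vertices in total, and such that every edge of G has multiplicity at most m. Then G contains a matching of size n (not necessarily rainbow). -/

import Mathlib

open Finset
open scoped Classical

section Defs

variable {V C E : Type*}

/-- The two endpoints of an edge of a multigraph given by endpoint functions `e₁ e₂`. -/
def edgeEnds [DecidableEq V] (e₁ e₂ : E → V) (e : E) : Finset V := {e₁ e, e₂ e}

/-- A finite set of edges is a matching: all edges are non-loops and pairwise vertex-disjoint. -/
def IsMatchingE [DecidableEq V] (e₁ e₂ : E → V) (M : Finset E) : Prop :=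
  (∀ e ∈ M, e₁ e ≠ e₂ e) ∧
  ∀ a ∈ M, ∀ b ∈ M, a ≠ b → Disjoint (edgeEnds e₁ e₂ a) (edgeEnds e₁ e₂ b)

/-- A set of edges is rainbow: all its edges have pairwise distinct colours. -/
def IsRainbow (col : E → C) (M : Finset E) : Prop := Set.InjOn col ↑M

/-- The colour class of colour `c`: the set of all edges of colour `c`. -/
noncomputable def colourClass [Fintype E] (col : E → C) (c : C) : Finset E :=
  Finset.univ.filter fun e => col e = c

/-- The set of vertices covered by a set of edges `M`. -/
def matchedVerts [DecidableEq V] (e₁ e₂ : E → V) (M : Finset E) : Finset V :=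
  M.biUnion (edgeEnds e₁ e₂)

/-- The set of vertices spanned by the colour class of `c`
(i.e. incident to at least one edge of colour `c`). -/
noncomputable def spannedVerts [Fintype V] [DecidableEq V] [Fintype E]
    (e₁ e₂ : E → V) (col : E → C) (c : C) : Finset V :=
  Finset.univ.filter fun v => ∃ e, col e = c ∧ (e₁ e = v ∨ e₂ e = v)

/-- `u` and `v` are distinct vertices joined by an edge of colour `c`. -/
def adjOfColour (e₁ e₂ : E → V) (col : E → C) (c : C) (u v : V) : Prop :=
  u ≠ v ∧ ∃ e, col e = c ∧ ((e₁ e = u ∧ e₂ e = v) ∨ (e₁ e = v ∧ e₂ e = u))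

/-- The colour class of `c` is a vertex-disjoint union of (non-trivial) cliques:
whenever `uv` and `vw` are edges of colour `c` with `u ≠ w`, also `uw` is an
edge of colour `c`. -/
def IsCliqueUnion (e₁ e₂ : E → V) (col : E → C) (c : C) : Prop :=
  ∀ u v w, adjOfColour e₁ e₂ col c u v → adjOfColour e₁ e₂ col c v w → u ≠ w →
    adjOfColour e₁ e₂ col c u w

end Defs

set_option linter.unusedSectionVars false
set_option linter.unnecessarySimpa false
set_option linter.unusedVariables false

namespace Stmt4

variable {V E : Type*} [Fintype V] [DecidableEq V] [Fintype E]

/-- `e` touches vertex `v`. -/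
def touches (e₁ e₂ : E → V) (e : E) (v : V) : Prop := e₁ e = v ∨ e₂ e = v

/-- vertex `v` is covered by edge set `M`. -/
def covered (e₁ e₂ : E → V) (M : Finset E) (v : V) : Prop := ∃ e ∈ M, touches e₁ e₂ e v

/-- `e` is an edge between `u` and `v`. -/
def ebtw (e₁ e₂ : E → V) (e : E) (u v : V) : Prop :=
  (e₁ e = u ∧ e₂ e = v) ∨ (e₁ e = v ∧ e₂ e = u)

/-- multigraph adjacency -/
def AdjM (e₁ e₂ : E → V) (u v : V) : Prop := u ≠ v ∧ ∃ e, ebtw e₁ e₂ e u v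

/-- matching with all endpoints in `A` -/
def MOn (e₁ e₂ : E → V) (A : Finset V) (M : Finset E) : Prop :=
  IsMatchingE e₁ e₂ M ∧ ∀ e ∈ M, e₁ e ∈ A ∧ e₂ e ∈ A

variable {e₁ e₂ : E → V}

lemma mem_edgeEnds {e : E} {v : V} : v ∈ edgeEnds e₁ e₂ e ↔ touches e₁ e₂ e v := by
  simp [edgeEnds, touches, eq_comm]

lemma ebtw_symm {e : E} {u v : V} (h : ebtw e₁ e₂ e u v) : ebtw e₁ e₂ e v u := by
  rcases h with h | h
  · exact Or.inr h
  · exact Or.inl h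

lemma ebtw_touches_left {e : E} {u v : V} (h : ebtw e₁ e₂ e u v) : touches e₁ e₂ e u := by
  rcases h with ⟨h, _⟩ | ⟨_, h⟩
  · exact Or.inl h
  · exact Or.inr h

lemma ebtw_touches_right {e : E} {u v : V} (h : ebtw e₁ e₂ e u v) : touches e₁ e₂ e v :=
  ebtw_touches_left (ebtw_symm h)

lemma AdjM_symm {u v : V} (h : AdjM e₁ e₂ u v) : AdjM e₁ e₂ v u :=
  ⟨h.1.symm, h.2.imp fun _ he => ebtw_symm he⟩

/-- the other endpoint of an edge -/
noncomputable def oth (e₁ e₂ : E → V) (e : E) (v : V) : V :=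
  if e₁ e = v then e₂ e else e₁ e

lemma ebtw_oth {e : E} {v : V} (h : touches e₁ e₂ e v) : ebtw e₁ e₂ e v (oth e₁ e₂ e v) := by
  unfold oth
  by_cases h1 : e₁ e = v
  · simp only [if_pos h1]
    exact Or.inl ⟨h1, rfl⟩
  · simp only [if_neg h1]
    rcases h with h | h
    · exact absurd h h1
    · exact Or.inr ⟨rfl, h⟩

lemma oth_ne {e : E} {v : V} (hl : e₁ e ≠ e₂ e) :
    oth e₁ e₂ e v ≠ v := by
  unfold oth
  by_cases h1 : e₁ e = v
  · simp only [if_pos h1]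
    intro hh; exact hl (hh.trans h1.symm).symm
  · simp only [if_neg h1]
    exact h1

lemma touches_oth {e : E} {v : V} (h : touches e₁ e₂ e v) :
    touches e₁ e₂ e (oth e₁ e₂ e v) := ebtw_touches_right (ebtw_oth h)

/-- In a matching, the edge at a vertex is unique. -/
lemma matching_unique {M : Finset E} (hM : IsMatchingE e₁ e₂ M) {e f : E} {v : V}
    (he : e ∈ M) (hf : f ∈ M) (hev : touches e₁ e₂ e v) (hfv : touches e₁ e₂ f v) : e = f := by
  by_contra hne
  have := hM.2 e he f hf hne
  exact (Finset.disjoint_left.1 this (mem_edgeEnds.2 hev)) (mem_edgeEnds.2 hfv)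

lemma card_matchedVerts {M : Finset E} (hM : IsMatchingE e₁ e₂ M) :
    (matchedVerts e₁ e₂ M).card = 2 * M.card := by
  unfold matchedVerts
  rw [Finset.card_biUnion (fun a ha b hb hab => hM.2 a ha b hb hab)]
  rw [Finset.sum_congr rfl (fun e he => ?_), Finset.sum_const, smul_eq_mul, mul_comm]
  have : e₂ e ∉ ({e₁ e} : Finset V) := by simp [(hM.1 e he).symm, eq_comm]
  simp [edgeEnds, Finset.card_insert_of_notMem, this, hM.1 e he]

lemma mem_matchedVerts {M : Finset E} {v : V} :
    v ∈ matchedVerts e₁ e₂ M ↔ covered e₁ e₂ M v := by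
  simp [matchedVerts, covered, mem_edgeEnds]

/-- The set of matchings on ground set `A`. -/
noncomputable def matchings (e₁ e₂ : E → V) (A : Finset V) : Finset (Finset E) :=
  (Finset.univ : Finset E).powerset.filter (MOn e₁ e₂ A)

lemma mem_matchings {A : Finset V} {M : Finset E} :
    M ∈ matchings e₁ e₂ A ↔ MOn e₁ e₂ A M := by
  simp [matchings]

/-- maximum matching size on ground set A -/
noncomputable def nu (e₁ e₂ : E → V) (A : Finset V) : ℕ :=
  (matchings e₁ e₂ A).sup Finset.card

lemma empty_MOn (A : Finset V) : MOn e₁ e₂ A (∅ : Finset E) := by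
  constructor
  · exact ⟨fun e he => absurd he (Finset.notMem_empty e), fun a ha => absurd ha (Finset.notMem_empty a)⟩
  · exact fun e he => absurd he (Finset.notMem_empty e)

lemma card_le_nu {A : Finset V} {M : Finset E} (h : MOn e₁ e₂ A M) : M.card ≤ nu e₁ e₂ A :=
  Finset.le_sup (mem_matchings.2 h)

lemma exists_max_matching (A : Finset V) :
    ∃ M : Finset E, MOn e₁ e₂ A M ∧ M.card = nu e₁ e₂ A := by
  have hne : (matchings e₁ e₂ A).Nonempty := ⟨∅, mem_matchings.2 (empty_MOn A)⟩
  obtain ⟨M, hM, hcard⟩ := Finset.exists_mem_eq_sup _ hne Finset.card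
  exact ⟨M, mem_matchings.1 hM, hcard.symm⟩

lemma ebtw_right_unique {e : E} {u v w : V} (h1 : ebtw e₁ e₂ e u v) (h2 : ebtw e₁ e₂ e u w) :
    v = w := by
  rcases h1 with ⟨ha, hb⟩ | ⟨ha, hb⟩ <;> rcases h2 with ⟨hc, hd⟩ | ⟨hc, hd⟩
  · exact hb.symm.trans hd
  · exact (hb.symm.trans hd).trans (ha.symm.trans hc)
  · exact (ha.symm.trans hc).trans (hb.symm.trans hd)
  · exact ha.symm.trans hc

lemma touches_cases {e : E} {u w v : V} (h : ebtw e₁ e₂ e u w) (ht : touches e₁ e₂ e v) :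
    v = u ∨ v = w := by
  rcases h with ⟨ha, hb⟩ | ⟨ha, hb⟩ <;> rcases ht with hc | hc
  · exact Or.inl (hc.symm.trans ha)
  · exact Or.inr (hc.symm.trans hb)
  · exact Or.inr (hc.symm.trans ha)
  · exact Or.inl (hc.symm.trans hb)

lemma ebtw_ne {e : E} {u v : V} (hl : e₁ e ≠ e₂ e) (h : ebtw e₁ e₂ e u v) : u ≠ v := by
  rcases h with ⟨ha, hb⟩ | ⟨ha, hb⟩
  · exact fun huv => hl ((ha.trans huv).trans hb.symm)
  · exact fun huv => hl (ha.trans (huv.symm.trans hb.symm))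

lemma matching_subset {M M' : Finset E} (h : M' ⊆ M) (hM : IsMatchingE e₁ e₂ M) :
    IsMatchingE e₁ e₂ M' :=
  ⟨fun e he => hM.1 e (h he), fun a ha b hb hab => hM.2 a (h ha) b (h hb) hab⟩

lemma MOn_subset {A : Finset V} {M M' : Finset E} (h : M' ⊆ M) (hM : MOn e₁ e₂ A M) :
    MOn e₁ e₂ A M' :=
  ⟨matching_subset h hM.1, fun e he => hM.2 e (h he)⟩

lemma matching_insert {M : Finset E} (hM : IsMatchingE e₁ e₂ M) {e : E}
    (hnl : e₁ e ≠ e₂ e) (h : ∀ v, touches e₁ e₂ e v → ¬ covered e₁ e₂ M v) :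
    IsMatchingE e₁ e₂ (insert e M) := by
  constructor
  · intro f hf
    rcases Finset.mem_insert.1 hf with hfe | hf
    · exact hfe ▸ hnl
    · exact hM.1 f hf
  · intro f hf g hg hfg
    have key : ∀ f' ∈ M, Disjoint (edgeEnds e₁ e₂ e) (edgeEnds e₁ e₂ f') := by
      intro f' hf'
      rw [Finset.disjoint_left]
      intro v hv hv'
      exact h v (mem_edgeEnds.1 hv) ⟨f', hf', mem_edgeEnds.1 hv'⟩
    rcases Finset.mem_insert.1 hf with hfe | hf
    · rcases Finset.mem_insert.1 hg with hge | hg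
      · exact absurd (hfe.trans hge.symm) hfg
      · exact hfe ▸ key g hg
    · rcases Finset.mem_insert.1 hg with hge | hg
      · exact hge ▸ (key f hf).symm
      · exact hM.2 f hf g hg hfg

lemma MOn_insert {A : Finset V} {M : Finset E} (hM : MOn e₁ e₂ A M) {e : E}
    (hnl : e₁ e ≠ e₂ e) (hgr : e₁ e ∈ A ∧ e₂ e ∈ A)
    (h : ∀ v, touches e₁ e₂ e v → ¬ covered e₁ e₂ M v) :
    MOn e₁ e₂ A (insert e M) := by
  refine ⟨matching_insert hM.1 hnl h, ?_⟩
  intro f hf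
  rcases Finset.mem_insert.1 hf with hfe | hf
  · exact hfe ▸ hgr
  · exact hM.2 f hf

lemma covered_insert {M : Finset E} {e : E} {v : V} :
    covered e₁ e₂ (insert e M) v ↔ touches e₁ e₂ e v ∨ covered e₁ e₂ M v := by
  unfold covered
  constructor
  · rintro ⟨f, hf, htf⟩
    rcases Finset.mem_insert.1 hf with hfe | hf
    · exact Or.inl (hfe ▸ htf)
    · exact Or.inr ⟨f, hf, htf⟩
  · rintro (h | ⟨f, hf, htf⟩)
    · exact ⟨e, Finset.mem_insert_self _ _, h⟩
    · exact ⟨f, Finset.mem_insert_of_mem hf, htf⟩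

lemma covered_erase {M : Finset E} (hM : IsMatchingE e₁ e₂ M) {f : E} (hf : f ∈ M) {v : V} :
    covered e₁ e₂ (M.erase f) v ↔ covered e₁ e₂ M v ∧ ¬ touches e₁ e₂ f v := by
  constructor
  · rintro ⟨g, hg, htg⟩
    refine ⟨⟨g, Finset.mem_of_mem_erase hg, htg⟩, fun htf => ?_⟩
    exact Finset.ne_of_mem_erase hg (matching_unique hM (Finset.mem_of_mem_erase hg) hf htg htf)
  · rintro ⟨⟨g, hg, htg⟩, htf⟩
    refine ⟨g, Finset.mem_erase.2 ⟨fun hgf => htf (hgf ▸ htg), hg⟩, htg⟩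

lemma exchange (A : Finset V) :
    ∀ (k : ℕ) (M N : Finset E), ((M \ N) ∪ (N \ M)).card ≤ k →
      MOn e₁ e₂ A M → MOn e₁ e₂ A N →
      (∀ P, MOn e₁ e₂ A P → P.card ≤ N.card) →
      ∀ z, covered e₁ e₂ M z → ¬ covered e₁ e₂ N z →
      ∃ y M', MOn e₁ e₂ A M' ∧ M' ⊆ M ∪ N ∧ M'.card = M.card ∧ ¬ covered e₁ e₂ M y ∧
        (∀ v, ¬ covered e₁ e₂ M' v ↔ (v = z ∨ (¬ covered e₁ e₂ M v ∧ v ≠ y))) := by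
  intro k
  induction k with
  | zero =>
    intro M N hcard hM hN _ z hMz hNz
    exfalso
    have hMN : M = N := by
      have h0 : ((M \ N) ∪ (N \ M)) = ∅ := Finset.card_eq_zero.1 (Nat.le_zero.1 hcard)
      apply Finset.Subset.antisymm
      · intro f hf
        by_contra hfN
        have : f ∈ (M \ N) ∪ (N \ M) := Finset.mem_union_left _ (Finset.mem_sdiff.2 ⟨hf, hfN⟩)
        simp [h0] at this
      · intro f hf
        by_contra hfM
        have : f ∈ (M \ N) ∪ (N \ M) := Finset.mem_union_right _ (Finset.mem_sdiff.2 ⟨hf, hfM⟩)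
        simp [h0] at this
    exact hNz (hMN ▸ hMz)
  | succ k ih =>
    intro M N hcard hM hN hNmax z hMz hNz
    obtain ⟨ez, hezM, heztz⟩ := hMz
    obtain ⟨a, hza⟩ : ∃ a, ebtw e₁ e₂ ez z a := ⟨_, ebtw_oth heztz⟩
    have haz : a ≠ z := (ebtw_ne (hM.1.1 ez hezM) hza).symm
    have hteza : touches e₁ e₂ ez a := ebtw_touches_right hza
    have hezN : ez ∉ N := fun h => hNz ⟨ez, h, heztz⟩
    by_cases hcovNa : covered e₁ e₂ N a
    · obtain ⟨ea, heaN, htaa⟩ := hcovNa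
      obtain ⟨b, hab⟩ : ∃ b, ebtw e₁ e₂ ea a b := ⟨_, ebtw_oth htaa⟩
      have hba : b ≠ a := (ebtw_ne (hN.1.1 ea heaN) hab).symm
      have hteab : touches e₁ e₂ ea b := ebtw_touches_right hab
      have hbz : b ≠ z := fun h => hNz ⟨ea, heaN, h ▸ hteab⟩
      have heaM : ea ∉ M := by
        intro h
        have h1 : ea = ez := matching_unique hM.1 h hezM htaa hteza
        exact hbz (ebtw_right_unique (h1 ▸ hab) (ebtw_symm hza))
      have heaez : ea ≠ ez := fun h => heaM (h ▸ hezM)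
      -- the new matching `N'` obtained from `N` by replacing `ea` with `ez`
      have hNeOn : MOn e₁ e₂ A (N.erase ea) := MOn_subset (Finset.erase_subset _ _) hN
      have hN'On : MOn e₁ e₂ A (insert ez (N.erase ea)) := by
        refine MOn_insert hNeOn (hM.1.1 ez hezM) (hM.2 ez hezM) ?_
        intro v htv hcov
        rw [covered_erase hN.1 heaN] at hcov
        rcases touches_cases hza htv with rfl | rfl
        · exact hNz hcov.1
        · exact hcov.2 htaa
      have hezNe : ez ∉ N.erase ea := fun h => hezN (Finset.mem_of_mem_erase h)
      have hN'card : (insert ez (N.erase ea)).card = N.card := by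
        rw [Finset.card_insert_of_notMem hezNe, Finset.card_erase_of_mem heaN]
        exact Nat.succ_pred_eq_of_pos (Finset.card_pos.2 ⟨ea, heaN⟩)
      have hcovN' : ∀ v, covered e₁ e₂ (insert ez (N.erase ea)) v ↔
          (touches e₁ e₂ ez v ∨ (covered e₁ e₂ N v ∧ ¬ touches e₁ e₂ ea v)) := by
        intro v
        rw [covered_insert, covered_erase hN.1 heaN]
      by_cases hcovMb : covered e₁ e₂ M b
      · -- recursive case
        have hN'max : ∀ P, MOn e₁ e₂ A P → P.card ≤ (insert ez (N.erase ea)).card := by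
          intro P hP; rw [hN'card]; exact hNmax P hP
        have hbN' : ¬ covered e₁ e₂ (insert ez (N.erase ea)) b := by
          rw [hcovN']
          rintro (htv | ⟨_, htb⟩)
          · rcases touches_cases hza htv with rfl | rfl
            · exact hbz rfl
            · exact hba rfl
          · exact htb hteab
        have hmeas : ((M \ insert ez (N.erase ea)) ∪ (insert ez (N.erase ea) \ M)).card ≤ k := by
          have hezD : ez ∈ (M \ N) ∪ (N \ M) :=
            Finset.mem_union_left _ (Finset.mem_sdiff.2 ⟨hezM, hezN⟩)
          have hsub : (M \ insert ez (N.erase ea)) ∪ (insert ez (N.erase ea) \ M) ⊆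
              ((M \ N) ∪ (N \ M)).erase ez := by
            intro f hf
            rcases Finset.mem_union.1 hf with hf | hf
            · obtain ⟨hfM, hfN'⟩ := Finset.mem_sdiff.1 hf
              have hfez : f ≠ ez := fun h => hfN' (h ▸ Finset.mem_insert_self _ _)
              have hfea : f ≠ ea := fun h => heaM (h ▸ hfM)
              have hfN : f ∉ N := fun h =>
                hfN' (Finset.mem_insert_of_mem (Finset.mem_erase.2 ⟨hfea, h⟩))
              exact Finset.mem_erase.2 ⟨hfez,
                Finset.mem_union_left _ (Finset.mem_sdiff.2 ⟨hfM, hfN⟩)⟩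
            · obtain ⟨hfN', hfM⟩ := Finset.mem_sdiff.1 hf
              have hfez : f ≠ ez := fun h => hfM (h ▸ hezM)
              have hfN : f ∈ N := by
                rcases Finset.mem_insert.1 hfN' with hfe | hf'
                · exact absurd hfe hfez
                · exact Finset.mem_of_mem_erase hf'
              exact Finset.mem_erase.2 ⟨hfez,
                Finset.mem_union_right _ (Finset.mem_sdiff.2 ⟨hfN, hfM⟩)⟩
          calc ((M \ insert ez (N.erase ea)) ∪ (insert ez (N.erase ea) \ M)).card
              ≤ (((M \ N) ∪ (N \ M)).erase ez).card := Finset.card_le_card hsub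
            _ = ((M \ N) ∪ (N \ M)).card - 1 := Finset.card_erase_of_mem hezD
            _ ≤ k := by omega
        obtain ⟨y, M₁, hM₁On, hM₁sub, hM₁card, hyM, hchar⟩ :=
          ih M (insert ez (N.erase ea)) hmeas hM hN'On hN'max b hcovMb hbN'
        have hzM₁ : covered e₁ e₂ M₁ z := by
          by_contra h
          rcases (hchar z).1 h with h' | ⟨h', _⟩
          · exact hbz h'.symm
          · exact h' ⟨ez, hezM, heztz⟩
        have hezM₁ : ez ∈ M₁ := by
          obtain ⟨g, hgM₁, htgz⟩ := hzM₁
          have hg' : g ∈ M ∪ insert ez (N.erase ea) := hM₁sub hgM₁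
          rcases Finset.mem_union.1 hg' with hg' | hg'
          · exact (matching_unique hM.1 hg' hezM htgz heztz) ▸ hgM₁
          · rcases Finset.mem_insert.1 hg' with hge | hg'
            · exact hge ▸ hgM₁
            · exact absurd ⟨g, Finset.mem_of_mem_erase hg', htgz⟩ hNz
        have hbM₁ : ¬ covered e₁ e₂ M₁ b := (hchar b).2 (Or.inl rfl)
        have heaM₁ : ea ∉ M₁ := fun h => hbM₁ ⟨ea, h, hteab⟩
        have hM₁eOn : MOn e₁ e₂ A (M₁.erase ez) := MOn_subset (Finset.erase_subset _ _) hM₁On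
        have hM₂On : MOn e₁ e₂ A (insert ea (M₁.erase ez)) := by
          refine MOn_insert hM₁eOn (hN.1.1 ea heaN) (hN.2 ea heaN) ?_
          intro v htv hcov
          rw [covered_erase hM₁On.1 hezM₁] at hcov
          rcases touches_cases hab htv with rfl | rfl
          · exact hcov.2 hteza
          · exact hbM₁ hcov.1
        have hcovM₂ : ∀ v, covered e₁ e₂ (insert ea (M₁.erase ez)) v ↔
            (touches e₁ e₂ ea v ∨ (covered e₁ e₂ M₁ v ∧ ¬ touches e₁ e₂ ez v)) := by
          intro v
          rw [covered_insert, covered_erase hM₁On.1 hezM₁]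
        refine ⟨y, insert ea (M₁.erase ez), hM₂On, ?_, ?_, hyM, ?_⟩
        · intro f hf
          rcases Finset.mem_insert.1 hf with hfe | hf
          · exact Finset.mem_union_right _ (hfe ▸ heaN)
          · have hf' := hM₁sub (Finset.mem_of_mem_erase hf)
            rcases Finset.mem_union.1 hf' with hf' | hf'
            · exact Finset.mem_union_left _ hf'
            · rcases Finset.mem_insert.1 hf' with hfe | hf'
              · exact Finset.mem_union_left _ (hfe ▸ hezM)
              · exact Finset.mem_union_right _ (Finset.mem_of_mem_erase hf')
        · have hpos := Finset.card_pos.2 ⟨ez, hezM₁⟩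
          rw [Finset.card_insert_of_notMem (fun h => heaM₁ (Finset.mem_of_mem_erase h)),
            Finset.card_erase_of_mem hezM₁]
          omega
        · intro v
          rw [hcovM₂ v]
          constructor
          · intro hv
            push_neg at hv
            obtain ⟨hv1, hv2⟩ := hv
            by_cases hvz : v = z
            · exact Or.inl hvz
            refine Or.inr ⟨?_, ?_⟩
            · intro hvM
              have hva : v ≠ a := fun h => hv1 (h ▸ htaa)
              have hvM₁ : covered e₁ e₂ M₁ v := by
                by_contra h
                rcases (hchar v).1 h with h' | ⟨h', _⟩
                · exact hv1 (h' ▸ hteab)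
                · exact h' hvM
              rcases touches_cases hza (hv2 hvM₁) with h | h
              · exact hvz h
              · exact hva h
            · intro hvy
              subst hvy
              have hvM₁ : covered e₁ e₂ M₁ v := by
                by_contra h
                rcases (hchar v).1 h with h' | ⟨_, h'⟩
                · subst h'
                  exact hyM hcovMb
                · exact h' rfl
              rcases touches_cases hza (hv2 hvM₁) with h | h
              · exact hvz h
              · subst h
                exact hyM ⟨ez, hezM, hteza⟩
          · rintro (hvz | ⟨hvM, hvy⟩)
            · subst hvz
              rintro (ht | ⟨_, htez⟩)
              · rcases touches_cases hab ht with h | h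
                · exact haz h.symm
                · exact hbz h.symm
              · exact htez heztz
            · rintro (ht | ⟨hvM₁, _⟩)
              · rcases touches_cases hab ht with h | h
                · exact hvM (h ▸ ⟨ez, hezM, hteza⟩)
                · exact hvM (h ▸ hcovMb)
              · exact (hchar v).2 (Or.inr ⟨hvM, hvy⟩) hvM₁
      · -- terminal case: b is M-missed
        have hMeOn : MOn e₁ e₂ A (M.erase ez) := MOn_subset (Finset.erase_subset _ _) hM
        have hM'On : MOn e₁ e₂ A (insert ea (M.erase ez)) := by
          refine MOn_insert hMeOn (hN.1.1 ea heaN) (hN.2 ea heaN) ?_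
          intro v htv hcov
          rw [covered_erase hM.1 hezM] at hcov
          rcases touches_cases hab htv with rfl | rfl
          · exact hcov.2 hteza
          · exact hcovMb hcov.1
        have hcovM' : ∀ v, covered e₁ e₂ (insert ea (M.erase ez)) v ↔
            (touches e₁ e₂ ea v ∨ (covered e₁ e₂ M v ∧ ¬ touches e₁ e₂ ez v)) := by
          intro v
          rw [covered_insert, covered_erase hM.1 hezM]
        refine ⟨b, insert ea (M.erase ez), hM'On, ?_, ?_, hcovMb, ?_⟩
        · intro f hf
          rcases Finset.mem_insert.1 hf with hfe | hf
          · exact Finset.mem_union_right _ (hfe ▸ heaN)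
          · exact Finset.mem_union_left _ (Finset.mem_of_mem_erase hf)
        · have hpos := Finset.card_pos.2 ⟨ez, hezM⟩
          rw [Finset.card_insert_of_notMem (fun h => heaM (Finset.mem_of_mem_erase h)),
            Finset.card_erase_of_mem hezM]
          omega
        · intro v
          rw [hcovM' v]
          constructor
          · intro hv
            push_neg at hv
            obtain ⟨hv1, hv2⟩ := hv
            by_cases hvz : v = z
            · exact Or.inl hvz
            refine Or.inr ⟨?_, ?_⟩
            · intro hvM
              rcases touches_cases hza (hv2 hvM) with h | h
              · exact hvz h
              · exact hv1 (h ▸ htaa)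
            · intro hvb
              exact hv1 (hvb ▸ hteab)
          · rintro (hvz | ⟨hvM, hvb⟩)
            · subst hvz
              rintro (ht | ⟨_, htez⟩)
              · rcases touches_cases hab ht with h | h
                · exact haz h.symm
                · exact hbz h.symm
              · exact htez heztz
            · rintro (ht | ⟨hvM', _⟩)
              · rcases touches_cases hab ht with h | h
                · exact hvM (h ▸ ⟨ez, hezM, hteza⟩)
                · exact hvb h
              · exact hvM hvM'
    · -- a is N-missed: contradiction with maximality of N
      exfalso
      have hN'On : MOn e₁ e₂ A (insert ez N) := by
        refine MOn_insert hN (hM.1.1 ez hezM) (hM.2 ez hezM) ?_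
        intro v htv hcov
        rcases touches_cases hza htv with rfl | rfl
        · exact hNz hcov
        · exact hcovNa hcov
      have := hNmax _ hN'On
      rw [Finset.card_insert_of_notMem hezN] at this
      omega

/-! ### Walks, reachability and components -/

def stepRel (e₁ e₂ : E → V) (B : Finset V) (x y : V) : Prop :=
  x ∈ B ∧ y ∈ B ∧ AdjM e₁ e₂ x y

def WalkIn (e₁ e₂ : E → V) (B : Finset V) (u w : V) (l : List V) : Prop :=
  l.Chain' (stepRel e₁ e₂ B) ∧ l.head? = some u ∧ l.getLast? = some w

def Reach (e₁ e₂ : E → V) (B : Finset V) (u w : V) : Prop := ∃ l, WalkIn e₁ e₂ B u w l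

lemma reach_refl (B : Finset V) (u : V) : Reach e₁ e₂ B u u :=
  ⟨[u], List.isChain_singleton u, rfl, rfl⟩

lemma stepRel_symm {B : Finset V} {x y : V} (h : stepRel e₁ e₂ B x y) : stepRel e₁ e₂ B y x :=
  ⟨h.2.1, h.1, AdjM_symm h.2.2⟩

lemma reach_symm {B : Finset V} {u w : V} (h : Reach e₁ e₂ B u w) : Reach e₁ e₂ B w u := by
  obtain ⟨l, hc, hh, hl⟩ := h
  refine ⟨l.reverse, ?_, ?_, ?_⟩
  · show List.IsChain _ l.reverse
    rw [List.isChain_reverse]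
    exact List.IsChain.imp (fun a b hab => stepRel_symm hab) hc
  · rw [List.head?_reverse]
    exact hl
  · rw [List.getLast?_reverse]
    exact hh

lemma reach_trans {B : Finset V} {u w x : V} (h1 : Reach e₁ e₂ B u w)
    (h2 : Reach e₁ e₂ B w x) : Reach e₁ e₂ B u x := by
  obtain ⟨l₁, hc₁, hh₁, hl₁⟩ := h1
  obtain ⟨l₂, hc₂, hh₂, hl₂⟩ := h2
  rcases l₂ with _ | ⟨w', tl⟩
  · simp at hh₂
  have hw' : w' = w := by simpa using hh₂
  subst hw'
  rcases tl with _ | ⟨z, t⟩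
  · have hx : w' = x := by simpa using hl₂
    exact hx ▸ ⟨l₁, hc₁, hh₁, hl₁⟩
  rcases l₁ with _ | ⟨u', r⟩
  · simp at hh₁
  have hu' : u' = u := by simpa using hh₁
  subst hu'
  refine ⟨(u' :: r) ++ (z :: t), ?_, ?_, ?_⟩
  · show List.IsChain _ _
    rw [List.isChain_append]
    refine ⟨hc₁, (List.isChain_cons_cons.1 hc₂).2, ?_⟩
    intro p hp q hq
    rw [hl₁] at hp
    simp only [Option.mem_def, Option.some.injEq] at hp
    simp only [List.head?_cons, Option.mem_def, Option.some.injEq] at hq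
    subst hp; subst hq
    exact (List.isChain_cons_cons.1 hc₂).1
  · rfl
  · rw [List.getLast?_append_of_ne_nil _ (by simp : (z :: t) ≠ [])]
    simpa using hl₂

lemma reach_step {B : Finset V} {u x y : V} (h : Reach e₁ e₂ B u x)
    (hs : stepRel e₁ e₂ B x y) : Reach e₁ e₂ B u y :=
  reach_trans h ⟨[x, y], by
    refine ⟨?_, rfl, rfl⟩
    exact List.isChain_cons_cons.2 ⟨hs, List.isChain_singleton y⟩⟩

/-- connected component of `v` within ground set `B` -/
noncomputable def compOf (e₁ e₂ : E → V) (B : Finset V) (v : V) : Finset V :=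
  B.filter (fun w => Reach e₁ e₂ B v w)

noncomputable def comps (e₁ e₂ : E → V) (B : Finset V) : Finset (Finset V) :=
  B.image (compOf e₁ e₂ B)

lemma mem_compOf {B : Finset V} {v w : V} :
    w ∈ compOf e₁ e₂ B v ↔ w ∈ B ∧ Reach e₁ e₂ B v w := Finset.mem_filter

lemma self_mem_compOf {B : Finset V} {v : V} (hv : v ∈ B) : v ∈ compOf e₁ e₂ B v :=
  mem_compOf.2 ⟨hv, reach_refl B v⟩

lemma compOf_eq_of_reach {B : Finset V} {v w : V} (h : Reach e₁ e₂ B v w) :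
    compOf e₁ e₂ B v = compOf e₁ e₂ B w := by
  ext x
  simp only [mem_compOf]
  exact ⟨fun ⟨hx, hr⟩ => ⟨hx, reach_trans (reach_symm h) hr⟩,
    fun ⟨hx, hr⟩ => ⟨hx, reach_trans h hr⟩⟩

lemma comps_disjoint {B : Finset V} {C₁ C₂ : Finset V} (h₁ : C₁ ∈ comps e₁ e₂ B)
    (h₂ : C₂ ∈ comps e₁ e₂ B) (hne : C₁ ≠ C₂) : Disjoint C₁ C₂ := by
  obtain ⟨v₁, _, rfl⟩ := Finset.mem_image.1 h₁
  obtain ⟨v₂, _, rfl⟩ := Finset.mem_image.1 h₂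
  rw [Finset.disjoint_left]
  intro x hx₁ hx₂
  obtain ⟨_, hr₁⟩ := mem_compOf.1 hx₁
  obtain ⟨_, hr₂⟩ := mem_compOf.1 hx₂
  exact hne ((compOf_eq_of_reach hr₁).trans (compOf_eq_of_reach hr₂).symm)

lemma comps_cover {B : Finset V} : B = (comps e₁ e₂ B).biUnion id := by
  ext v
  simp only [Finset.mem_biUnion, id]
  constructor
  · intro hv
    exact ⟨compOf e₁ e₂ B v, Finset.mem_image_of_mem _ hv, self_mem_compOf hv⟩
  · rintro ⟨C, hC, hvC⟩
    obtain ⟨w, _, rfl⟩ := Finset.mem_image.1 hC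
    exact (mem_compOf.1 hvC).1

lemma comp_subset {B : Finset V} {C : Finset V} (hC : C ∈ comps e₁ e₂ B) : C ⊆ B := by
  intro v hv
  rw [comps_cover (e₁ := e₁) (e₂ := e₂) (B := B)]
  exact Finset.mem_biUnion.2 ⟨C, hC, hv⟩

lemma comp_closed {B : Finset V} {C : Finset V} (hC : C ∈ comps e₁ e₂ B) {x y : V}
    (hx : x ∈ C) (hy : y ∈ B) (hadj : AdjM e₁ e₂ x y) : y ∈ C := by
  obtain ⟨v, _, rfl⟩ := Finset.mem_image.1 hC
  obtain ⟨hxB, hr⟩ := mem_compOf.1 hx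
  exact mem_compOf.2 ⟨hy, reach_step hr ⟨hxB, hy, hadj⟩⟩

lemma sum_comps_card {B : Finset V} : ∑ C ∈ comps e₁ e₂ B, C.card = B.card := by
  have hdis : ∀ C₁ ∈ comps e₁ e₂ B, ∀ C₂ ∈ comps e₁ e₂ B, C₁ ≠ C₂ →
      Disjoint (id C₁) (id C₂) := fun C₁ h₁ C₂ h₂ hne => comps_disjoint h₁ h₂ hne
  conv_rhs => rw [comps_cover (e₁ := e₁) (e₂ := e₂) (B := B)]
  rw [Finset.card_biUnion hdis]
  rfl

lemma filter_comps_card {B : Finset V} (p : V → Prop) [DecidablePred p] :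
    (B.filter p).card = ∑ C ∈ comps e₁ e₂ B, (C.filter p).card := by
  have hdis : ∀ C₁ ∈ comps e₁ e₂ B, ∀ C₂ ∈ comps e₁ e₂ B, C₁ ≠ C₂ →
      Disjoint (C₁.filter p) (C₂.filter p) :=
    fun C₁ h₁ C₂ h₂ hne => Finset.disjoint_filter_filter (comps_disjoint h₁ h₂ hne)
  have hcov : B.filter p = (comps e₁ e₂ B).biUnion (fun C => C.filter p) := by
    conv_lhs => rw [comps_cover (e₁ := e₁) (e₂ := e₂) (B := B)]
    rw [Finset.filter_biUnion]
    rfl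
  rw [hcov, Finset.card_biUnion hdis]

/-- inserting an edge between two missed vertices into a maximum matching is absurd -/
lemma no_adjacent_missed {A : Finset V} {M : Finset E} (hM : MOn e₁ e₂ A M)
    (hmax : ∀ P, MOn e₁ e₂ A P → P.card ≤ M.card) {u v : V} (hu : u ∈ A) (hv : v ∈ A)
    (hadj : AdjM e₁ e₂ u v) (hmu : ¬ covered e₁ e₂ M u) (hmv : ¬ covered e₁ e₂ M v) :
    False := by
  obtain ⟨hne, e, he⟩ := hadj
  have hnl : e₁ e ≠ e₂ e := by
    rcases he with ⟨h1, h2⟩ | ⟨h1, h2⟩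
    · rw [h1, h2]; exact hne
    · rw [h1, h2]; exact hne.symm
  have hM' : MOn e₁ e₂ A (insert e M) := by
    refine MOn_insert hM hnl ?_ ?_
    · rcases he with ⟨h1, h2⟩ | ⟨h1, h2⟩
      · exact ⟨h1 ▸ hu, h2 ▸ hv⟩
      · exact ⟨h1 ▸ hv, h2 ▸ hu⟩
    · intro x htx hcx
      rcases touches_cases he htx with rfl | rfl
      · exact hmu hcx
      · exact hmv hcx
  have := hmax _ hM'
  have heM : e ∉ M := fun h => hmu ⟨e, h, ebtw_touches_left he⟩
  rw [Finset.card_insert_of_notMem heM] at this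
  omega

/-- Gallai-type lemma: if every vertex of `A` is avoidable, then no maximum matching misses
two distinct vertices in the same component. -/
lemma missed_not_reach {A : Finset V}
    (Havoid : ∀ v ∈ A, ∃ N, MOn e₁ e₂ A N ∧ N.card = nu e₁ e₂ A ∧ ¬ covered e₁ e₂ N v) :
    ∀ M u w, MOn e₁ e₂ A M → M.card = nu e₁ e₂ A → ¬ covered e₁ e₂ M u →
      ¬ covered e₁ e₂ M w → u ≠ w → ¬ Reach e₁ e₂ A u w := by
  by_contra hcon
  push_neg at hcon
  obtain ⟨M₀, u₀, w₀, hM₀, hc₀, hu₀, hw₀, hne₀, hr₀⟩ := hcon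
  have hBad : ∃ d, ∃ (M : Finset E) (u w : V) (l : List V), MOn e₁ e₂ A M ∧ M.card = nu e₁ e₂ A ∧
      ¬ covered e₁ e₂ M u ∧ ¬ covered e₁ e₂ M w ∧ u ≠ w ∧
      WalkIn e₁ e₂ A u w l ∧ l.length = d := by
    obtain ⟨l, hl⟩ := hr₀
    exact ⟨l.length, M₀, u₀, w₀, l, hM₀, hc₀, hu₀, hw₀, hne₀, hl, rfl⟩
  classical
  obtain ⟨M, u, w, l, hM, hc, hu, hw, hne, hwalk, hlen⟩ := Nat.find_spec hBad
  have hmaxM : ∀ P, MOn e₁ e₂ A P → P.card ≤ M.card := fun P hP => hc ▸ card_le_nu hP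
  obtain ⟨hchain, hhead, hlast⟩ := hwalk
  rcases l with _ | ⟨u', l'⟩
  · simp at hhead
  have hu' : u' = u := by simpa using hhead
  subst hu'
  rcases l' with _ | ⟨z, t⟩
  · exact hne (by simpa using hlast)
  have hstep : stepRel e₁ e₂ A u' z := (List.isChain_cons_cons.1 hchain).1
  have hzu : z ≠ u' := (hstep.2.2.1).symm
  have huA : u' ∈ A := hstep.1
  have hzA : z ∈ A := hstep.2.1
  have hBad2 : ∀ M' u'' w'', MOn e₁ e₂ A M' → M'.card = nu e₁ e₂ A →
      ¬ covered e₁ e₂ M' u'' → ¬ covered e₁ e₂ M' w'' → u'' ≠ w'' →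
      ∀ l'', WalkIn e₁ e₂ A u'' w'' l'' → l''.length < Nat.find hBad → False := by
    intro M' u'' w'' h1 h2 h3 h4 h5 l'' h6 h7
    exact Nat.find_min hBad h7 ⟨M', u'', w'', l'', h1, h2, h3, h4, h5, h6, rfl⟩
  -- z is not missed (else [u, z] would be a shorter/minimal bad walk of length 2, forcing
  -- an augmenting edge)
  have hzcov : covered e₁ e₂ M z := by
    by_contra hzmiss
    exact no_adjacent_missed hM hmaxM huA hzA hstep.2.2 hu hzmiss
  have hzw : z ≠ w := by
    intro h
    subst h
    -- then u and w are adjacent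
    exact no_adjacent_missed hM hmaxM huA hzA hstep.2.2 hu hw
  obtain ⟨N, hN, hNcard, hNz⟩ := Havoid z hzA
  have hNmax : ∀ P, MOn e₁ e₂ A P → P.card ≤ N.card := fun P hP => hNcard ▸ card_le_nu hP
  obtain ⟨y, M', hM'On, _, hM'card, hyM, hchar⟩ :=
    exchange A ((M \ N) ∪ (N \ M)).card M N le_rfl hM hN hNmax z hzcov hNz
  have hM'nu : M'.card = nu e₁ e₂ A := hM'card.trans hc
  have hM'z : ¬ covered e₁ e₂ M' z := (hchar z).2 (Or.inl rfl)
  by_cases hyu : y = u'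
  · -- w is still missed by M', and z—w is a shorter walk
    have hM'w : ¬ covered e₁ e₂ M' w := (hchar w).2 (Or.inr ⟨hw, fun h => hne (h.trans hyu).symm⟩)
    have hwalk' : WalkIn e₁ e₂ A z w (z :: t) := by
      refine ⟨(List.isChain_cons_cons.1 hchain).2, rfl, ?_⟩
      rw [List.getLast?_cons_cons] at hlast
      exact hlast
    refine hBad2 M' z w hM'On hM'nu hM'z hM'w hzw (z :: t) hwalk' ?_
    rw [← hlen]
    simp only [List.length_cons]
    omega
  · -- u is still missed by M', and u, z are adjacent and both missed
    have hM'u : ¬ covered e₁ e₂ M' u' := (hchar u').2 (Or.inr ⟨hu, fun h => hyu h.symm⟩)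
    have hM'max : ∀ P, MOn e₁ e₂ A P → P.card ≤ M'.card := fun P hP => hM'card ▸ hmaxM P hP
    exact no_adjacent_missed hM'On hM'max huA hzA hstep.2.2 hM'u hM'z

/-! ### Berge–Tutte -/

lemma MOn_mono {A A' : Finset V} {M : Finset E} (h : A' ⊆ A) (hM : MOn e₁ e₂ A' M) :
    MOn e₁ e₂ A M :=
  ⟨hM.1, fun e he => ⟨h (hM.2 e he).1, h (hM.2 e he).2⟩⟩

lemma nu_mono {A A' : Finset V} (h : A' ⊆ A) : nu e₁ e₂ A' ≤ nu e₁ e₂ A := by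
  apply Finset.sup_le
  intro M hM
  exact card_le_nu (MOn_mono h (mem_matchings.1 hM))

lemma covered_mem {A : Finset V} {M : Finset E} (hM : MOn e₁ e₂ A M) {v : V}
    (h : covered e₁ e₂ M v) : v ∈ A := by
  obtain ⟨e, he, ht⟩ := h
  rcases ht with ht | ht
  · exact ht ▸ (hM.2 e he).1
  · exact ht ▸ (hM.2 e he).2

lemma card_covered {A : Finset V} {M : Finset E} (hM : MOn e₁ e₂ A M) :
    (A.filter (fun v => covered e₁ e₂ M v)).card = 2 * M.card := by
  have heq : A.filter (fun v => covered e₁ e₂ M v) = matchedVerts e₁ e₂ M := by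
    ext v
    rw [Finset.mem_filter, mem_matchedVerts]
    exact ⟨fun h => h.2, fun h => ⟨covered_mem hM h, h⟩⟩
  rw [heq, card_matchedVerts hM.1]

lemma adjM_of_edge {e : E} (hnl : e₁ e ≠ e₂ e) : AdjM e₁ e₂ (e₁ e) (e₂ e) :=
  ⟨hnl, e, Or.inl ⟨rfl, rfl⟩⟩

lemma comp_odd_of_one_missed {A : Finset V} {M : Finset E} (hM : MOn e₁ e₂ A M)
    {C : Finset V} (hC : C ∈ comps e₁ e₂ A)
    (h1 : (C.filter (fun v => ¬ covered e₁ e₂ M v)).card = 1) : Odd C.card := by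
  set MC := M.filter (fun e => e₁ e ∈ C) with hMC_def
  have hMCsub : MC ⊆ M := Finset.filter_subset _ _
  have hMCm : IsMatchingE e₁ e₂ MC := matching_subset hMCsub hM.1
  have hends : ∀ e ∈ MC, e₁ e ∈ C ∧ e₂ e ∈ C := by
    intro e he
    have h1' : e₁ e ∈ C := (Finset.mem_filter.1 he).2
    have heM : e ∈ M := hMCsub he
    exact ⟨h1', comp_closed hC h1' (hM.2 e heM).2 (adjM_of_edge (hM.1.1 e heM))⟩
  have hcov : C.filter (fun v => covered e₁ e₂ M v) = matchedVerts e₁ e₂ MC := by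
    ext v
    rw [Finset.mem_filter, mem_matchedVerts]
    constructor
    · rintro ⟨hvC, e, he, ht⟩
      have heMC : e ∈ MC := by
        rw [hMC_def, Finset.mem_filter]
        refine ⟨he, ?_⟩
        rcases ht with ht | ht
        · exact ht ▸ hvC
        · exact comp_closed hC (ht ▸ hvC) (hM.2 e he).1
            (AdjM_symm (adjM_of_edge (hM.1.1 e he)))
      exact ⟨e, heMC, ht⟩
    · rintro ⟨e, he, ht⟩
      have := hends e he
      constructor
      · rcases ht with ht | ht
        · exact ht ▸ this.1
        · exact ht ▸ this.2
      · exact ⟨e, hMCsub he, ht⟩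
  have hsplit : (C.filter (fun v => covered e₁ e₂ M v)).card +
      (C.filter (fun v => ¬ covered e₁ e₂ M v)).card = C.card := by
    simpa using Finset.card_filter_add_card_filter_not
      (s := C) (p := fun v => covered e₁ e₂ M v)
  rw [h1] at hsplit
  rw [← hsplit, hcov, card_matchedVerts hMCm]
  exact ⟨MC.card, by ring⟩

theorem bergeTutte (A : Finset V) : ∃ S, S ⊆ A ∧
    A.card + S.card ≤ 2 * nu e₁ e₂ A +
      ((comps e₁ e₂ (A \ S)).filter (fun C => Odd C.card)).card := by
  induction A using Finset.strongInduction with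
  | _ A ih =>
  by_cases hcase : ∃ v ∈ A, nu e₁ e₂ (A.erase v) < nu e₁ e₂ A
  · obtain ⟨v, hv, hlt⟩ := hcase
    obtain ⟨S', hS'sub, hineq⟩ := ih (A.erase v) (Finset.erase_ssubset hv)
    refine ⟨insert v S', Finset.insert_subset hv (hS'sub.trans (Finset.erase_subset _ _)), ?_⟩
    have hsdiff : A \ insert v S' = (A.erase v) \ S' := by
      ext x
      simp only [Finset.mem_sdiff, Finset.mem_insert, Finset.mem_erase]
      tauto
    have hvS' : v ∉ S' := fun h => (Finset.mem_erase.1 (hS'sub h)).1 rfl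
    rw [hsdiff]
    rw [Finset.card_insert_of_notMem hvS']
    have h1 : (A.erase v).card + 1 = A.card := by
      rw [Finset.card_erase_of_mem hv]
      exact Nat.succ_pred_eq_of_pos (Finset.card_pos.2 ⟨v, hv⟩)
    omega
  · push_neg at hcase
    have havoid : ∀ v ∈ A, ∃ N, MOn e₁ e₂ A N ∧ N.card = nu e₁ e₂ A ∧
        ¬ covered e₁ e₂ N v := by
      intro v hv
      obtain ⟨N, hN, hNcard⟩ := exists_max_matching (e₁ := e₁) (e₂ := e₂) (A.erase v)
      refine ⟨N, MOn_mono (Finset.erase_subset _ _) hN, ?_, ?_⟩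
      · rw [hNcard]
        exact le_antisymm (nu_mono (Finset.erase_subset _ _)) (hcase v hv)
      · intro hcov
        exact (Finset.mem_erase.1 (covered_mem hN hcov)).1 rfl
    refine ⟨∅, Finset.empty_subset A, ?_⟩
    rw [Finset.sdiff_empty, Finset.card_empty, Nat.add_zero]
    obtain ⟨M, hM, hMcard⟩ := exists_max_matching (e₁ := e₁) (e₂ := e₂) A
    have hsplit : (A.filter (fun v => covered e₁ e₂ M v)).card +
        (A.filter (fun v => ¬ covered e₁ e₂ M v)).card = A.card := by
      simpa using Finset.card_filter_add_card_filter_not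
        (s := A) (p := fun v => covered e₁ e₂ M v)
    rw [card_covered hM, hMcard] at hsplit
    have hinj : ∀ u ∈ A.filter (fun v => ¬ covered e₁ e₂ M v),
        ∀ w ∈ A.filter (fun v => ¬ covered e₁ e₂ M v),
        compOf e₁ e₂ A u = compOf e₁ e₂ A w → u = w := by
      intro u hu w hw heq
      obtain ⟨huA, humiss⟩ := Finset.mem_filter.1 hu
      obtain ⟨hwA, hwmiss⟩ := Finset.mem_filter.1 hw
      by_contra hne
      have : u ∈ compOf e₁ e₂ A w := heq ▸ self_mem_compOf huA
      exact missed_not_reach havoid M w u hM hMcard hwmiss humiss (Ne.symm hne)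
        ((mem_compOf.1 this).2)
    have hmaps : ∀ v ∈ A.filter (fun v => ¬ covered e₁ e₂ M v),
        compOf e₁ e₂ A v ∈ (comps e₁ e₂ A).filter (fun C => Odd C.card) := by
      intro v hv
      obtain ⟨hvA, hvmiss⟩ := Finset.mem_filter.1 hv
      refine Finset.mem_filter.2 ⟨Finset.mem_image_of_mem _ hvA, ?_⟩
      refine comp_odd_of_one_missed hM (Finset.mem_image_of_mem _ hvA) ?_
      rw [Finset.card_eq_one]
      refine ⟨v, ?_⟩
      ext w
      simp only [Finset.mem_filter, Finset.mem_singleton]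
      constructor
      · rintro ⟨hwC, hwmiss⟩
        by_contra hne
        obtain ⟨hwA, hr⟩ := mem_compOf.1 hwC
        exact missed_not_reach havoid M v w hM hMcard hvmiss hwmiss (Ne.symm hne) hr
      · rintro rfl
        exact ⟨self_mem_compOf hvA, hvmiss⟩
    have hcard := Finset.card_le_card_of_injOn _ hmaps (fun u hu w hw => hinj u hu w hw)
    omega

/-! ### colour classes: cliques, pieces and edge counts -/

section Colour

variable {γ : Type*} {col : E → γ}

lemma adjC_symm {c : γ} {u v : V} (h : adjOfColour e₁ e₂ col c u v) :
    adjOfColour e₁ e₂ col c v u := by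
  obtain ⟨hne, e, hc, hor⟩ := h
  exact ⟨hne.symm, e, hc, hor.symm⟩

lemma adjC_to_AdjM {c : γ} {u v : V} (h : adjOfColour e₁ e₂ col c u v) : AdjM e₁ e₂ u v :=
  ⟨h.1, h.2.imp fun e he => he.2⟩

lemma mem_spanned {c : γ} {v : V} :
    v ∈ spannedVerts e₁ e₂ col c ↔ ∃ e, col e = c ∧ (e₁ e = v ∨ e₂ e = v) := by
  simp [spannedVerts]

lemma spanned_partner (hloop : ∀ e : E, e₁ e ≠ e₂ e) {c : γ} {v : V}
    (h : v ∈ spannedVerts e₁ e₂ col c) : ∃ u, adjOfColour e₁ e₂ col c v u := by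
  obtain ⟨e, hc, ht⟩ := mem_spanned.1 h
  refine ⟨oth e₁ e₂ e v, (oth_ne (hloop e)).symm, e, hc, ?_⟩
  exact ebtw_oth ht

/-- lower bound for the number of (ordered) adjacent pairs inside a fully-spanned odd
component with no isolated clique-vertices -/
lemma OB_lower {c : γ} (hclique : IsCliqueUnion e₁ e₂ col c)
    {C : Finset V} (hodd : Odd C.card)
    (hbig : ∀ v ∈ C, ∃ u ∈ C, u ≠ v ∧ adjOfColour e₁ e₂ col c v u) :
    C.card + 1 ≤ ∑ a ∈ C, (C.filter (fun u => adjOfColour e₁ e₂ col c a u)).card := by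
  classical
  set rel : V → V → Prop := fun a b => a = b ∨ adjOfColour e₁ e₂ col c a b with hrel_def
  have hrelrefl : ∀ a, rel a a := fun a => Or.inl rfl
  have hrelsymm : ∀ {a b}, rel a b → rel b a := by
    rintro a b (rfl | h)
    · exact Or.inl rfl
    · exact Or.inr (adjC_symm h)
  have hreltrans : ∀ {a b x}, rel a b → rel b x → rel a x := by
    rintro a b x (rfl | hab) h2
    · exact h2
    rcases h2 with rfl | hbx
    · exact Or.inr hab
    by_cases hax : a = x
    · exact Or.inl hax
    · exact Or.inr (hclique a b x hab hbx hax)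
  set piece : V → Finset V := fun v => C.filter (rel v) with hpiece_def
  have hmem_piece : ∀ {v u : V}, u ∈ piece v ↔ u ∈ C ∧ rel v u := fun {v u} => Finset.mem_filter
  have hself : ∀ a ∈ C, a ∈ piece a := fun a ha => hmem_piece.2 ⟨ha, hrelrefl a⟩
  have hpieceeq : ∀ {a b : V}, b ∈ piece a → piece b = piece a := by
    intro a b hb
    obtain ⟨hbC, hrab⟩ := hmem_piece.1 hb
    ext x
    rw [hmem_piece, hmem_piece]
    exact ⟨fun ⟨hx, hr⟩ => ⟨hx, hreltrans hrab hr⟩,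
      fun ⟨hx, hr⟩ => ⟨hx, hreltrans (hrelsymm hrab) hr⟩⟩
  have hcard2 : ∀ a ∈ C, 2 ≤ (piece a).card := by
    intro a ha
    obtain ⟨u, huC, hune, hadj⟩ := hbig a ha
    exact Finset.one_lt_card.2 ⟨a, hself a ha, u, hmem_piece.2 ⟨huC, Or.inr hadj⟩, fun h => hune h.symm⟩
  set parts : Finset (Finset V) := C.image piece with hparts_def
  have hdisj : ∀ P₁ ∈ parts, ∀ P₂ ∈ parts, P₁ ≠ P₂ → Disjoint (id P₁) (id P₂) := by
    intro P₁ h₁ P₂ h₂ hne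
    obtain ⟨a, _, rfl⟩ := Finset.mem_image.1 h₁
    obtain ⟨b, _, rfl⟩ := Finset.mem_image.1 h₂
    rw [Finset.disjoint_left]
    intro x hx₁ hx₂
    exact hne ((hpieceeq hx₁).symm.trans (hpieceeq hx₂))
  have hcover : C = parts.biUnion id := by
    ext x
    simp only [Finset.mem_biUnion, id]
    constructor
    · intro hx
      exact ⟨piece x, Finset.mem_image_of_mem _ hx, hself x hx⟩
    · rintro ⟨P, hP, hxP⟩
      obtain ⟨a, _, rfl⟩ := Finset.mem_image.1 hP
      exact (hmem_piece.1 hxP).1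
  have hsum1 : ∑ P ∈ parts, P.card = C.card := by
    conv_rhs => rw [hcover]
    rw [Finset.card_biUnion hdisj]
    rfl
  have hstep1 : ∑ a ∈ C, (C.filter (fun u => adjOfColour e₁ e₂ col c a u)).card
      = ∑ a ∈ C, ((piece a).card - 1) := by
    apply Finset.sum_congr rfl
    intro a ha
    have : C.filter (fun u => adjOfColour e₁ e₂ col c a u) = (piece a).erase a := by
      ext u
      rw [Finset.mem_erase, hmem_piece, Finset.mem_filter]
      constructor
      · rintro ⟨huC, hadj⟩
        exact ⟨fun h => hadj.1 h.symm, huC, Or.inr hadj⟩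
      · rintro ⟨hua, huC, (rfl | hadj)⟩
        · exact absurd rfl hua
        · exact ⟨huC, hadj⟩
    rw [this, Finset.card_erase_of_mem (hself a ha)]
  have hstep2 : ∑ a ∈ C, ((piece a).card - 1) = ∑ P ∈ parts, P.card * (P.card - 1) := by
    conv_lhs => rw [hcover]
    rw [Finset.sum_biUnion hdisj]
    apply Finset.sum_congr rfl
    intro P hP
    obtain ⟨b, hbC, rfl⟩ := Finset.mem_image.1 hP
    have : ∀ a ∈ id (piece b), (piece a).card - 1 = (piece b).card - 1 := by
      intro a ha
      rw [hpieceeq ha]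
    rw [Finset.sum_congr rfl this, Finset.sum_const, smul_eq_mul]
    rfl
  -- some part has odd cardinality
  have hoddpart : ∃ P ∈ parts, Odd P.card := by
    by_contra hcon
    push_neg at hcon
    have heven : Even (∑ P ∈ parts, P.card) := by
      rw [Finset.even_sum_iff_even_card_odd]
      have : parts.filter (fun P => Odd P.card) = ∅ := by
        rw [Finset.filter_eq_empty_iff]
        exact fun {P} hP hoddP => (Nat.not_even_iff_odd.2 hoddP) (Nat.not_odd_iff_even.1 (hcon P hP))
      rw [this]
      simp
    rw [hsum1] at heven
    exact (Nat.not_even_iff_odd.2 hodd) heven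
  obtain ⟨P₀, hP₀, hP₀odd⟩ := hoddpart
  have hP₀2 : 2 ≤ P₀.card := by
    obtain ⟨b, hbC, rfl⟩ := Finset.mem_image.1 hP₀
    exact hcard2 b hbC
  have hP₀3 : 3 ≤ P₀.card := by
    rcases hP₀odd with ⟨k, hk⟩
    omega
  have hterm : ∀ P ∈ parts.erase P₀, P.card ≤ P.card * (P.card - 1) := by
    intro P hP
    obtain ⟨b, hbC, rfl⟩ := Finset.mem_image.1 (Finset.mem_of_mem_erase hP)
    have h2 := hcard2 b hbC
    calc (piece b).card = (piece b).card * 1 := (mul_one _).symm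
      _ ≤ (piece b).card * ((piece b).card - 1) := Nat.mul_le_mul_left _ (by omega)
  have hterm0 : P₀.card + 1 ≤ P₀.card * (P₀.card - 1) := by
    calc P₀.card + 1 ≤ 3 * (P₀.card - 1) := by omega
      _ ≤ P₀.card * (P₀.card - 1) := Nat.mul_le_mul_right _ hP₀3
  rw [hstep1, hstep2]
  calc C.card + 1 = (∑ P ∈ parts, P.card) + 1 := by rw [hsum1]
    _ = (P₀.card + ∑ P ∈ parts.erase P₀, P.card) + 1 := by
        rw [Finset.add_sum_erase _ _ hP₀]
    _ = (P₀.card + 1) + ∑ P ∈ parts.erase P₀, P.card := by ring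
    _ ≤ P₀.card * (P₀.card - 1) + ∑ P ∈ parts.erase P₀, P.card * (P.card - 1) :=
        Nat.add_le_add hterm0 (Finset.sum_le_sum hterm)
    _ = ∑ P ∈ parts, P.card * (P.card - 1) :=
        Finset.add_sum_erase parts (fun P => P.card * (P.card - 1)) hP₀

end Colour

lemma colours_per_pair {n : ℕ} {col : E → Fin n} {a u : V} :
    ((Finset.univ : Finset (Fin n)).filter (fun c => adjOfColour e₁ e₂ col c a u)).card ≤
    ((Finset.univ : Finset E).filter
      (fun e => (e₁ e = a ∧ e₂ e = u) ∨ (e₁ e = u ∧ e₂ e = a))).card := by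
  apply Finset.card_le_card_of_surjOn col
  intro c hc
  simp only [Finset.coe_filter, Set.mem_setOf_eq, Finset.mem_univ, true_and] at hc
  obtain ⟨-, e, hce, hor⟩ := hc
  exact ⟨e, by simp [hor], hce⟩

end Stmt4

set_option maxHeartbeats 1600000 in
open Stmt4 in
/-- every `(n, 2n + 2m, m)`-multigraph (each colour class a disjoint
union of non-trivial cliques spanning at least `2n + 2m` vertices, edge
multiplicity at most `m`) contains a matching of size `n`. -/
theorem stmt_4 {V E : Type*} [Fintype V] [DecidableEq V] [Fintype E]
    (n m : ℕ) (e₁ e₂ : E → V) (col : E → Fin n)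
    (hloop : ∀ e : E, e₁ e ≠ e₂ e)
    (hclique : ∀ c : Fin n, IsCliqueUnion e₁ e₂ col c)
    (hspan : ∀ c : Fin n, 2 * n + 2 * m ≤ (spannedVerts e₁ e₂ col c).card)
    (hmult : ∀ u v : V,
      (Finset.univ.filter fun e : E =>
        (e₁ e = u ∧ e₂ e = v) ∨ (e₁ e = v ∧ e₂ e = u)).card ≤ m) :
    ∃ M : Finset E, IsMatchingE e₁ e₂ M ∧ M.card = n := by
  classical
  rcases Nat.eq_zero_or_pos n with rfl | hn
  · exact ⟨∅, ⟨fun e he => absurd he (Finset.notMem_empty e),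
      fun a ha => absurd ha (Finset.notMem_empty a)⟩, rfl⟩
  by_contra hcon
  -- every matching has size < n
  have hnu : nu e₁ e₂ (Finset.univ : Finset V) < n := by
    by_contra h
    push_neg at h
    obtain ⟨M, hM, hMcard⟩ := exists_max_matching (e₁ := e₁) (e₂ := e₂) (Finset.univ : Finset V)
    obtain ⟨M', hM'sub, hM'card⟩ := Finset.exists_subset_card_eq (hMcard.symm ▸ h : n ≤ M.card)
    exact hcon ⟨M', matching_subset hM'sub hM.1, hM'card⟩
  obtain ⟨S, -, hBT⟩ := bergeTutte (e₁ := e₁) (e₂ := e₂) (Finset.univ : Finset V)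
  set B : Finset V := (Finset.univ : Finset V) \ S with hB_def
  set CS := comps e₁ e₂ B with hCS_def
  set wf : Finset V → ℕ := fun C => if Odd C.card then C.card - 1 else C.card with hwf_def
  have hwC : ∀ C : Finset V, wf C + (if Odd C.card then 1 else 0) = C.card := by
    intro C
    simp only [hwf_def]
    by_cases h : Odd C.card
    · rw [if_pos h, if_pos h]
      obtain ⟨k, hk⟩ := h
      omega
    · rw [if_neg h, if_neg h]
      omega
  have hsumo : ∑ C ∈ CS, (if Odd C.card then 1 else 0) =
      (CS.filter (fun C => Odd C.card)).card := (Finset.card_filter _ _).symm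
  have hsumB : ∑ C ∈ CS, C.card = B.card := sum_comps_card
  have hBS : B.card + S.card = Fintype.card V := by
    rw [hB_def]
    have := Finset.card_sdiff_add_card_eq_card (Finset.subset_univ S)
    simpa using this
  have hsumw : (∑ C ∈ CS, wf C) + (CS.filter (fun C => Odd C.card)).card + S.card
      = Fintype.card V := by
    rw [← hsumo, ← Finset.sum_add_distrib]
    have : ∑ C ∈ CS, (wf C + if Odd C.card then 1 else 0) = ∑ C ∈ CS, C.card :=
      Finset.sum_congr rfl (fun C _ => hwC C)
    rw [this, hsumB, hBS]
  have hVcard : (Finset.univ : Finset V).card + S.card ≤ 2 * nu e₁ e₂ (Finset.univ : Finset V) +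
      ((comps e₁ e₂ B).filter (fun C => Odd C.card)).card := hBT
  have hstar : (∑ C ∈ CS, wf C) + 2 * S.card + 2 ≤ 2 * n := by
    rw [Finset.card_univ] at hVcard
    rw [← hCS_def] at hVcard
    omega
  -- per-colour analysis
  set good : Fin n → Finset V → Prop := fun c C =>
    (C ⊆ spannedVerts e₁ e₂ col c ∧ Odd C.card) ∧
      (∀ v ∈ C, ∃ u ∈ C, u ≠ v ∧ adjOfColour e₁ e₂ col c v u) with hgood_def
  have hgoodcount : ∀ c : Fin n, 2 * m + 2 ≤ (CS.filter (good c)).card := by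
    intro c
    set sp := spannedVerts e₁ e₂ col c with hsp_def
    have hsp : 2 * n + 2 * m ≤ sp.card := hspan c
    -- spanned decomposition over S and the components
    have hdecomp : sp.card ≤ S.card + ∑ C ∈ CS, (C.filter (fun v => v ∈ sp)).card := by
      have h1 : (sp.filter (fun v => v ∈ S)).card + (sp.filter (fun v => v ∉ S)).card
          = sp.card := by
        simpa using Finset.card_filter_add_card_filter_not
          (s := sp) (p := fun v => v ∈ S)
      have h2 : (sp.filter (fun v => v ∈ S)).card ≤ S.card :=
        Finset.card_le_card (fun v hv => (Finset.mem_filter.1 hv).2)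
      have h3 : (sp.filter (fun v => v ∉ S)).card ≤ (B.filter (fun v => v ∈ sp)).card := by
        apply Finset.card_le_card
        intro v hv
        obtain ⟨hv1, hv2⟩ := Finset.mem_filter.1 hv
        exact Finset.mem_filter.2 ⟨Finset.mem_sdiff.2 ⟨Finset.mem_univ v, hv2⟩, hv1⟩
      have h4 : (B.filter (fun v => v ∈ sp)).card
          = ∑ C ∈ CS, (C.filter (fun v => v ∈ sp)).card := filter_comps_card _
      omega
    have hkey : ∀ C ∈ CS, (C.filter (fun v => v ∈ sp)).card ≤
        wf C + (if C ⊆ sp ∧ Odd C.card then 1 else 0) := by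
      intro C hC
      by_cases hsub : C ⊆ sp
      · have hfe : C.filter (fun v => v ∈ sp) = C :=
          Finset.filter_true_of_mem (fun x hx => hsub hx)
        rw [hfe]
        simp only [hwf_def]
        by_cases hoddC : Odd C.card
        · rw [if_pos hoddC, if_pos ⟨hsub, hoddC⟩]
          obtain ⟨k, hk⟩ := hoddC
          omega
        · rw [if_neg hoddC, if_neg (fun h => hoddC h.2)]
          omega
      · obtain ⟨x, hxC, hxsp⟩ := Finset.not_subset.1 hsub
        have hle : (C.filter (fun v => v ∈ sp)).card ≤ C.card - 1 := by
          have : C.filter (fun v => v ∈ sp) ⊆ C.erase x := by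
            intro v hv
            obtain ⟨hv1, hv2⟩ := Finset.mem_filter.1 hv
            exact Finset.mem_erase.2 ⟨fun h => hxsp (h ▸ hv2), hv1⟩
          calc (C.filter (fun v => v ∈ sp)).card ≤ (C.erase x).card := Finset.card_le_card this
            _ = C.card - 1 := Finset.card_erase_of_mem hxC
        have hC1 : 1 ≤ C.card := Finset.card_pos.2 ⟨x, hxC⟩
        simp only [hwf_def]
        by_cases hoddC : Odd C.card
        · rw [if_pos hoddC]
          omega
        · rw [if_neg hoddC]
          omega
    have hchain : 2 * n + 2 * m ≤ S.card + (∑ C ∈ CS, wf C) +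
        (CS.filter (fun C => C ⊆ sp ∧ Odd C.card)).card := by
      have h5 : ∑ C ∈ CS, (C.filter (fun v => v ∈ sp)).card ≤
          ∑ C ∈ CS, (wf C + (if C ⊆ sp ∧ Odd C.card then 1 else 0)) :=
        Finset.sum_le_sum hkey
      have h6 : ∑ C ∈ CS, (wf C + (if C ⊆ sp ∧ Odd C.card then 1 else 0)) =
          (∑ C ∈ CS, wf C) + (CS.filter (fun C => C ⊆ sp ∧ Odd C.card)).card := by
        rw [Finset.sum_add_distrib, (Finset.card_filter _ _)]
      omega
    -- bad components inject into S
    have hVne : Nonempty V := by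
      have : 0 < sp.card := by omega
      obtain ⟨v, -⟩ := Finset.card_pos.1 this
      exact ⟨v⟩
    obtain ⟨v₀⟩ := hVne
    set F := CS.filter (fun C => C ⊆ sp ∧ Odd C.card) with hF_def
    set badP : Finset V → Prop := fun C =>
      ¬ (∀ v ∈ C, ∃ u ∈ C, u ≠ v ∧ adjOfColour e₁ e₂ col c v u) with hbadP_def
    have hbadcard : (F.filter badP).card ≤ S.card := by
      set φ : Finset V → V := fun C =>
        if h : ∃ x, x ∈ S ∧ ∃ v ∈ C, adjOfColour e₁ e₂ col c v x then h.choose else v₀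
        with hφ_def
      have hex : ∀ C ∈ F.filter badP,
          ∃ x, x ∈ S ∧ ∃ v ∈ C, adjOfColour e₁ e₂ col c v x := by
        intro C hC
        obtain ⟨hCF, hbad⟩ := Finset.mem_filter.1 hC
        obtain ⟨hCCS, hCsub, hCodd⟩ := Finset.mem_filter.1 hCF
        rw [hbadP_def] at hbad
        push_neg at hbad
        obtain ⟨v, hvC, hval⟩ := hbad
        obtain ⟨u, hadj⟩ := spanned_partner hloop (hCsub hvC)
        have huC : u ∉ C := fun huC => hval u huC hadj.1.symm hadj
        have huS : u ∈ S := by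
          by_contra huS
          exact huC (comp_closed hCCS hvC (Finset.mem_sdiff.2 ⟨Finset.mem_univ u, huS⟩)
            (adjC_to_AdjM hadj))
        exact ⟨u, huS, v, hvC, hadj⟩
      apply Finset.card_le_card_of_injOn φ
      · intro C hC
        have h := hex C hC
        rw [hφ_def]
        simp only [dif_pos h]
        exact h.choose_spec.1
      · intro C hC C' hC' heq
        have h := hex C hC
        have h' := hex C' hC'
        rw [hφ_def] at heq
        simp only [dif_pos h, dif_pos h'] at heq
        obtain ⟨-, v, hvC, hadj⟩ := h.choose_spec
        obtain ⟨-, v', hv'C, hadj'⟩ := h'.choose_spec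
        rw [heq] at hadj
        by_contra hne
        have hCCS : C ∈ CS := (Finset.mem_filter.1 ((Finset.mem_filter.1 hC).1)).1
        have hC'CS : C' ∈ CS := (Finset.mem_filter.1 ((Finset.mem_filter.1 hC').1)).1
        have hdisjCC := comps_disjoint (hCS_def ▸ hCCS) (hCS_def ▸ hC'CS) hne
        have hvv' : v ≠ v' := by
          intro hvv
          exact (Finset.disjoint_left.1 hdisjCC) hvC (hvv ▸ hv'C)
        have hadjvv : adjOfColour e₁ e₂ col c v v' :=
          hclique c v _ v' hadj (adjC_symm hadj') hvv'
        have hv'B : v' ∈ B := comp_subset (hCS_def ▸ hC'CS) hv'C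
        have : v' ∈ C := comp_closed (hCS_def ▸ hCCS) hvC hv'B (adjC_to_AdjM hadjvv)
        exact (Finset.disjoint_left.1 hdisjCC) this hv'C
    have hsplitF : (F.filter badP).card + (F.filter (fun C => ¬ badP C)).card = F.card := by
      simpa using Finset.card_filter_add_card_filter_not (s := F) (p := badP)
    have hgoodF : F.filter (fun C => ¬ badP C) = CS.filter (good c) := by
      rw [hF_def, Finset.filter_filter]
      apply Finset.filter_congr
      intro C hC
      rw [hgood_def, hbadP_def]
      simp only [not_not]
      exact Iff.rfl
    rw [← hgoodF]
    omega
  -- double counting pairs (colour, good component)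
  set gcount : Finset V → ℕ := fun C =>
    ((Finset.univ : Finset (Fin n)).filter (fun c => good c C)).card with hgcount_def
  have hdouble : ∑ c : Fin n, (CS.filter (good c)).card = ∑ C ∈ CS, gcount C := by
    have h1 : ∀ c : Fin n, (CS.filter (good c)).card =
        ∑ C ∈ CS, (if good c C then 1 else 0) := fun c => Finset.card_filter _ _
    have h2 : ∀ C, gcount C = ∑ c : Fin n, (if good c C then 1 else 0) :=
      fun C => Finset.card_filter _ _
    rw [Finset.sum_congr rfl (fun c _ => h1 c)]
    rw [Finset.sum_comm]
    exact Finset.sum_congr rfl (fun C _ => (h2 C).symm)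
  have hlower : n * (2 * m + 2) ≤ ∑ c : Fin n, (CS.filter (good c)).card := by
    calc n * (2 * m + 2) = (Finset.univ : Finset (Fin n)).card * (2 * m + 2) := by
          rw [Finset.card_univ, Fintype.card_fin]
      _ ≤ ∑ c : Fin n, (CS.filter (good c)).card := by
          rw [← smul_eq_mul]
          exact Finset.card_nsmul_le_sum _ _ _ (fun c _ => hgoodcount c)
  -- capacity bound per component
  have hcomp_bound : ∀ C ∈ CS, gcount C ≤ m * wf C := by
    intro C hC
    by_cases hg0 : gcount C = 0
    · omega
    have hgne : ((Finset.univ : Finset (Fin n)).filter (fun c => good c C)).Nonempty := by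
      rw [← Finset.card_pos]
      simp only [hgcount_def] at hg0
      omega
    obtain ⟨c₀, hc₀⟩ := hgne
    have hodd : Odd C.card := ((Finset.mem_filter.1 hc₀).2).1.2
    have hOBlow : ∀ c ∈ (Finset.univ : Finset (Fin n)).filter (fun c => good c C),
        C.card + 1 ≤ ∑ a ∈ C, (C.filter (fun u => adjOfColour e₁ e₂ col c a u)).card := by
      intro c hc
      obtain ⟨-, hgoodc⟩ := Finset.mem_filter.1 hc
      exact OB_lower (hclique c) hgoodc.1.2 hgoodc.2
    have hOBcap : ∑ c : Fin n, (∑ a ∈ C, (C.filter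
        (fun u => adjOfColour e₁ e₂ col c a u)).card) ≤ m * (C.card * (C.card - 1)) := by
      rw [Finset.sum_comm]
      have hinner : ∀ a ∈ C, ∑ c : Fin n,
          (C.filter (fun u => adjOfColour e₁ e₂ col c a u)).card ≤ m * (C.card - 1) := by
        intro a ha
        have h1 : ∀ c : Fin n, (C.filter (fun u => adjOfColour e₁ e₂ col c a u)).card =
            ∑ u ∈ C, (if adjOfColour e₁ e₂ col c a u then 1 else 0) :=
          fun c => Finset.card_filter _ _
        rw [Finset.sum_congr rfl (fun c _ => h1 c), Finset.sum_comm]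
        have h2 : ∀ u ∈ C, ∑ c : Fin n, (if adjOfColour e₁ e₂ col c a u then 1 else 0) ≤
            (if u = a then 0 else m) := by
          intro u hu
          by_cases hua : u = a
          · rw [if_pos hua]
            have hz : ∀ c : Fin n, (if adjOfColour e₁ e₂ col c a u then 1 else 0) = 0 := by
              intro c
              rw [if_neg (fun hadj => hadj.1 hua.symm)]
            rw [Finset.sum_congr rfl (fun c _ => hz c)]
            simp
          · rw [if_neg hua]
            have h3 : ∑ c : Fin n, (if adjOfColour e₁ e₂ col c a u then 1 else 0) =
                ((Finset.univ : Finset (Fin n)).filter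
                  (fun c => adjOfColour e₁ e₂ col c a u)).card :=
              (Finset.card_filter _ _).symm
            rw [h3]
            exact le_trans colours_per_pair (hmult a u)
        calc ∑ u ∈ C, ∑ c : Fin n, (if adjOfColour e₁ e₂ col c a u then 1 else 0)
            ≤ ∑ u ∈ C, (if u = a then 0 else m) := Finset.sum_le_sum h2
          _ = (if a = a then 0 else m) + ∑ u ∈ C.erase a, (if u = a then 0 else m) :=
              (Finset.add_sum_erase C (fun u => if u = a then 0 else m) ha).symm
          _ ≤ 0 + ∑ u ∈ C.erase a, m := by
              rw [if_pos rfl]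
              refine Nat.add_le_add_left (Finset.sum_le_sum ?_) 0
              intro u hu
              split <;> omega
          _ = (C.card - 1) * m := by
              rw [Finset.sum_const, smul_eq_mul, Finset.card_erase_of_mem ha]
              omega
          _ = m * (C.card - 1) := mul_comm _ _
      calc ∑ a ∈ C, ∑ c : Fin n, (C.filter (fun u => adjOfColour e₁ e₂ col c a u)).card
          ≤ ∑ a ∈ C, m * (C.card - 1) := Finset.sum_le_sum hinner
        _ = C.card * (m * (C.card - 1)) := by rw [Finset.sum_const, smul_eq_mul]
        _ = m * (C.card * (C.card - 1)) := by ring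
    have hmid : gcount C * (C.card + 1) ≤ m * (C.card * (C.card - 1)) := by
      calc gcount C * (C.card + 1)
          ≤ ∑ c ∈ (Finset.univ : Finset (Fin n)).filter (fun c => good c C),
              (∑ a ∈ C, (C.filter (fun u => adjOfColour e₁ e₂ col c a u)).card) := by
            rw [hgcount_def, ← smul_eq_mul]
            exact Finset.card_nsmul_le_sum _ _ _ hOBlow
        _ ≤ ∑ c : Fin n, (∑ a ∈ C, (C.filter (fun u => adjOfColour e₁ e₂ col c a u)).card) :=
            Finset.sum_le_sum_of_subset (Finset.filter_subset _ _)
        _ ≤ m * (C.card * (C.card - 1)) := hOBcap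
    have hq1 : 1 ≤ C.card := by
      obtain ⟨k, hk⟩ := hodd
      omega
    have hwfC : wf C = C.card - 1 := by
      simp only [hwf_def, if_pos hodd]
    rw [hwfC]
    have hfin : gcount C * (C.card + 1) ≤ (m * (C.card - 1)) * (C.card + 1) := by
      calc gcount C * (C.card + 1) ≤ m * (C.card * (C.card - 1)) := hmid
        _ ≤ m * ((C.card + 1) * (C.card - 1)) := by
            refine Nat.mul_le_mul_left m (Nat.mul_le_mul_right _ ?_)
            omega
        _ = (m * (C.card - 1)) * (C.card + 1) := by ring
    exact Nat.le_of_mul_le_mul_right hfin (by omega)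
  -- final contradiction
  have hupper : ∑ C ∈ CS, gcount C ≤ m * (∑ C ∈ CS, wf C) := by
    calc ∑ C ∈ CS, gcount C ≤ ∑ C ∈ CS, m * wf C := Finset.sum_le_sum hcomp_bound
      _ = m * (∑ C ∈ CS, wf C) := (Finset.mul_sum _ _ _).symm
  set W := ∑ C ∈ CS, wf C with hW_def
  have hWle : W + 2 ≤ 2 * n := by omega
  have hchain2 : n * (2 * m + 2) ≤ m * W := by
    calc n * (2 * m + 2) ≤ ∑ c : Fin n, (CS.filter (good c)).card := hlower
      _ = ∑ C ∈ CS, gcount C := hdouble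
      _ ≤ m * W := hupper
  have hmW : m * W ≤ 2 * (m * n) := by
    calc m * W ≤ m * (2 * n) := Nat.mul_le_mul_left m (by omega)
      _ = 2 * (m * n) := by ring
  have hexp : n * (2 * m + 2) = 2 * (m * n) + 2 * n := by ring
  omega
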